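/- Let G be a finite directed graph on vertex set V and F ⊆ V with |F| ≤ f. Suppose that for every partition (A,B) of V with A−F and B−F nonempty, either A (f+1)-propagates to B−F avoiding F, or B (f+1)-propagates to A−F avoiding F (condition SC with parameter F). Then the graph G−F (obtained by deleting all vertices of F) has a unique source component in its strongly connected component decomposition. -/

import Mathlib

open Set

variable {V : Type*}

/-- A (directed) path: nonempty list of distinct vertices with consecutive edges. -/
def DiPath (E : V → V → Prop) (p : List V) : Prop :=
  p ≠ [] ∧ p.Nodup ∧ p.Chain' E

/-- A path excludes `F` if none of its internal vertices lies in `F`. -/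
def Excludes (F : Set V) (p : List V) : Prop :=
  ∀ x ∈ p.tail.dropLast, x ∉ F

/-- A path from (a vertex of) `A` to `v`. -/
def PathFromTo (E : V → V → Prop) (A : Set V) (v : V) (p : List V) : Prop :=
  DiPath E p ∧ (∃ a ∈ A, p.head? = some a) ∧ p.getLast? = some v

/-- There exist `n` pairwise internally-disjoint `A`-`v` paths excluding `F`
(sharing only the terminal `v`). -/
def DisjPaths (E : V → V → Prop) (F A : Set V) (v : V) (n : ℕ) : Prop :=
  ∃ P : Fin n → List V,
    (∀ i, PathFromTo E A v (P i) ∧ Excludes F (P i)) ∧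
    (∀ i j, i ≠ j → ∀ x, x ∈ P i → x ∈ P j → x = v)

/-- `A` (f+1)-propagates to every vertex of `B` avoiding `F`. -/
def Propagates (E : V → V → Prop) (f : ℕ) (F A B : Set V) : Prop :=
  ∀ v ∈ B, DisjPaths E F A v (f + 1)

/-- Condition SC with parameter `F`. -/
def CondSC (E : V → V → Prop) (f : ℕ) (F : Set V) : Prop :=
  ∀ A B : Set V, A ∪ B = Set.univ → A ∩ B = ∅ →
    (A \ F).Nonempty → (B \ F).Nonempty →
    Propagates E f F A (B \ F) ∨ Propagates E f F B (A \ F)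

/-- Reachability within the vertex set `W`. -/
def ReachIn (E : V → V → Prop) (W : Set V) : V → V → Prop :=
  Relation.ReflTransGen (fun a b => a ∈ W ∧ b ∈ W ∧ E a b)

/-- `S` is a (maximal) strongly connected component of the induced subgraph on `W`. -/
def IsSCCIn (E : V → V → Prop) (W S : Set V) : Prop :=
  S.Nonempty ∧ S ⊆ W ∧ (∀ u ∈ S, ∀ v ∈ S, ReachIn E W u v) ∧
  ∀ T, S ⊆ T → T ⊆ W → (∀ u ∈ T, ∀ v ∈ T, ReachIn E W u v) → T = S

/-- `S` is a source component of `G − F`: an SCC of the induced subgraph on `V − F`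
receiving no edge from a vertex of `V − F` outside `S`. -/
def IsSourceComponent (E : V → V → Prop) (F S : Set V) : Prop :=
  IsSCCIn E (Set.univ \ F) S ∧ ∀ u, u ∉ F → u ∉ S → ∀ s ∈ S, ¬ E u s

/-- In-neighborhood of `T` contained in `B`. -/
def inNbr (E : V → V → Prop) (B T : Set V) : Set V :=
  {u ∈ B | ∃ v ∈ T, E u v}

/-- `N(F→S)`: vertices of `F` with an edge into `S`. -/
def NFS (E : V → V → Prop) (F S : Set V) : Set V :=
  {w ∈ F | ∃ s ∈ S, E w s}

/-- Edge relation of the subgraph induced on `U`. -/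
def inducedE (E : V → V → Prop) (U : Set V) : V → V → Prop :=
  fun a b => a ∈ U ∧ b ∈ U ∧ E a b

/-- Condition NC with parameter `F`. -/
def CondNC (E : V → V → Prop) (f : ℕ) (F : Set V) : Prop :=
  ∀ L C R : Set V, L ∪ C ∪ R = Set.univ →
    L ∩ C = ∅ → L ∩ R = ∅ → C ∩ R = ∅ →
    (L \ F).Nonempty → (R \ F).Nonempty →
    f < (inNbr E (R ∪ C) (L \ F)).ncard ∨ f < (inNbr E (L ∪ C) (R \ F)).ncard

/-- The strongly connected component of `v` inside `W`. -/
def sccOf (E : V → V → Prop) (W : Set V) (v : V) : Set V :=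
  {u ∈ W | ReachIn E W u v ∧ ReachIn E W v u}

lemma sccOf_isSCCIn (E : V → V → Prop) (W : Set V) {v : V} (hv : v ∈ W) :
    IsSCCIn E W (sccOf E W v) := by
  have hvmem : v ∈ sccOf E W v := ⟨hv, Relation.ReflTransGen.refl, Relation.ReflTransGen.refl⟩
  refine ⟨⟨v, hvmem⟩, fun u hu => hu.1, ?_, ?_⟩
  · rintro u ⟨_, huv, _⟩ w ⟨_, _, hvw⟩
    exact huv.trans hvw
  · intro T hST hTW hconn
    refine subset_antisymm (fun t ht => ?_) hST
    exact ⟨hTW ht, hconn t ht v (hST hvmem), hconn v (hST hvmem) t ht⟩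

lemma sccIn_eq_of_mem {E : V → V → Prop} {W S1 S2 : Set V}
    (h1 : IsSCCIn E W S1) (h2 : IsSCCIn E W S2) {x : V} (hx1 : x ∈ S1) (hx2 : x ∈ S2) :
    S1 = S2 := by
  obtain ⟨_, hW1, hc1, hmax1⟩ := h1
  obtain ⟨_, hW2, hc2, hmax2⟩ := h2
  have hconn : ∀ u ∈ S1 ∪ S2, ∀ w ∈ S1 ∪ S2, ReachIn E W u w := by
    intro u hu w hw
    have hux : ReachIn E W u x := hu.elim (fun h => hc1 u h x hx1) (fun h => hc2 u h x hx2)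
    have hxw : ReachIn E W x w := hw.elim (fun h => hc1 x hx1 w h) (fun h => hc2 x hx2 w h)
    exact hux.trans hxw
  have hU : S1 ∪ S2 ⊆ W := union_subset hW1 hW2
  have e1 := hmax1 (S1 ∪ S2) subset_union_left hU hconn
  have e2 := hmax2 (S1 ∪ S2) subset_union_right hU hconn
  exact e1.symm.trans e2

/-- Any vertex of a path ending in a source component `S` that is not in `F`
lies in `S`, except possibly the head; more precisely every vertex not in `F`
whose successors are fine... we state: every vertex of the path not in `F` is in `S`. -/
lemma path_in_source {E : V → V → Prop} {F S : Set V}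
    (hsrc : ∀ u, u ∉ F → u ∉ S → ∀ s ∈ S, ¬ E u s) :
    ∀ (p : List V) (v : V), p.Chain' E → p.getLast? = some v → v ∈ S →
      (∀ x ∈ p.tail.dropLast, x ∉ F) → ∀ x ∈ p, x ∉ F → x ∈ S := by
  intro p
  induction p with
  | nil => intro v _ h; simp at h
  | cons a q ih =>
    intro v hch hlast hv hint x hx hxF
    cases q with
    | nil =>
      simp only [List.getLast?_singleton, Option.some.injEq] at hlast
      simp only [List.mem_singleton] at hx
      subst hlast; subst hx; exact hv
    | cons b r =>
      have hch' : (b :: r).Chain' E := hch.tail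
      have hedge : E a b := (List.isChain_cons_cons.mp hch).1
      have hlast' : (b :: r).getLast? = some v := by
        rwa [List.getLast?_cons_cons] at hlast
      have hsub : ∀ y ∈ (b :: r).tail.dropLast, y ∈ (a :: b :: r).tail.dropLast := by
        intro y hy
        simp only [List.tail_cons] at hy ⊢
        cases r with
        | nil => simp at hy
        | cons c s =>
          rw [List.dropLast_cons₂]
          exact List.mem_cons_of_mem _ hy
      have hint' : ∀ y ∈ (b :: r).tail.dropLast, y ∉ F := fun y hy => hint y (hsub y hy)
      have hIH := ih v hch' hlast' hv hint'
      have hbS : b ∈ S := by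
        cases r with
        | nil =>
          simp only [List.getLast?_singleton, Option.some.injEq] at hlast'
          subst hlast'; exact hv
        | cons c s =>
          have hbF : b ∉ F := by
            apply hint
            simp only [List.tail_cons, List.dropLast_cons₂]
            exact List.mem_cons_self
          exact hIH b List.mem_cons_self hbF
      rcases List.mem_cons.mp hx with rfl | hx'
      · by_contra haS
        exact hsrc x hxF haS b hbS hedge
      · exact hIH x hx' hxF

lemma head_mem_of_head? {p : List V} {a : V} (h : p.head? = some a) : a ∈ p := by
  cases p with
  | nil => simp at h
  | cons x xs =>
    simp only [List.head?_cons, Option.some.injEq] at h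
    subst h; exact List.mem_cons_self

/-- Two source components are equal, given SC and `|F| ≤ f`. -/
lemma source_component_unique [Fintype V] {E : V → V → Prop} {f : ℕ} {F : Set V}
    (hF : F.ncard ≤ f) (hSC : CondSC E f F) {S1 S2 : Set V}
    (h1 : IsSourceComponent E F S1) (h2 : IsSourceComponent E F S2) : S1 = S2 := by
  by_contra hne
  have hdisj : ∀ x, x ∈ S1 → x ∈ S2 → False := fun x hx1 hx2 =>
    hne (sccIn_eq_of_mem h1.1 h2.1 hx1 hx2)
  obtain ⟨v1, hv1⟩ := h1.1.1
  obtain ⟨v2, hv2⟩ := h2.1.1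
  have hS1W : S1 ⊆ Set.univ \ F := h1.1.2.1
  have hS2W : S2 ⊆ Set.univ \ F := h2.1.2.1
  have hv1F : v1 ∉ F := (hS1W hv1).2
  have hv2F : v2 ∉ F := (hS2W hv2).2
  have hv1c : v1 ∈ S2ᶜ := fun h => hdisj v1 hv1 h
  have hA : (S2ᶜ \ F).Nonempty := ⟨v1, hv1c, hv1F⟩
  have hB : (S2 \ F).Nonempty := ⟨v2, hv2, hv2F⟩
  rcases hSC S2ᶜ S2 (compl_union_self S2) (compl_inter_self S2) hA hB with hP | hP
  · -- f+1 disjoint paths from S2ᶜ to v2, heads all in F: contradiction with |F| ≤ f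
    obtain ⟨P, hP1, hP2⟩ := hP v2 ⟨hv2, hv2F⟩
    have hne' : ∀ i, P i ≠ [] := fun i => ((hP1 i).1.1).1
    set g : Fin (f + 1) → V := fun i => (P i).head (hne' i) with hg
    have hghead : ∀ i, (P i).head? = some (g i) := fun i => List.head?_eq_head _
    have hgF : ∀ i, g i ∈ F := by
      intro i
      obtain ⟨a, haA, haeq⟩ := (hP1 i).1.2.1
      have hag : a = g i := by
        rw [hghead i] at haeq; exact (Option.some.injEq _ _ ▸ haeq.symm)
      by_contra hgiF
      have := path_in_source h2.2 (P i) v2 ((hP1 i).1.1).2.2 (hP1 i).1.2.2 hv2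
        (hP1 i).2 (g i) (List.head_mem _) hgiF
      exact (hag ▸ haA) (hag ▸ this)
    have hginj : Function.Injective g := by
      intro i j hij
      by_contra hne''
      have hgi : g i ∈ P i := List.head_mem _
      have hgj : g i ∈ P j := hij ▸ List.head_mem _
      have := hP2 i j hne'' (g i) hgi hgj
      exact hv2F (this ▸ hgF i)
    have hcard : f + 1 ≤ F.ncard := by
      have h1 : (Set.range g).ncard = f + 1 := by
        rw [← Set.image_univ, Set.ncard_image_of_injective _ hginj, Set.ncard_univ,
          Nat.card_eq_fintype_card, Fintype.card_fin]
      have h2 : Set.range g ⊆ F := Set.range_subset_iff.mpr hgF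
      calc f + 1 = (Set.range g).ncard := h1.symm
        _ ≤ F.ncard := Set.ncard_le_ncard h2 F.toFinite
    omega
  · -- a path from S2 to v1 ∈ S1: its head would lie in S1 ∩ S2
    obtain ⟨P, hP1, hP2⟩ := hP v1 ⟨hv1c, hv1F⟩
    obtain ⟨a, haS2, haeq⟩ := (hP1 0).1.2.1
    have haF : a ∉ F := (hS2W haS2).2
    have haS1 : a ∈ S1 :=
      path_in_source h1.2 (P 0) v1 ((hP1 0).1.1).2.2 (hP1 0).1.2.2 hv1
        (hP1 0).2 a (head_mem_of_head? haeq) haF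
    exact hdisj a haS1 haS2

/-- If `G` satisfies condition SC with parameter `F`, `|F| ≤ f < |V|`, then `G − F`
has a unique source component. -/
theorem unique_source_component [Fintype V] (E : V → V → Prop) (f : ℕ) (F : Set V)
    (hF : F.ncard ≤ f) (hfn : f < Fintype.card V)
    (hSC : CondSC E f F) :
    ∃! S : Set V, IsSourceComponent E F S := by
  classical
  set W : Set V := Set.univ \ F with hWdef
  -- W is nonempty
  have hWne : W.Nonempty := by
    by_contra h
    rw [Set.not_nonempty_iff_eq_empty, Set.diff_eq_empty] at h
    have : Fintype.card V ≤ F.ncard := by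
      have : (Set.univ : Set V).ncard ≤ F.ncard :=
        Set.ncard_le_ncard h F.toFinite
      rwa [Set.ncard_univ, Nat.card_eq_fintype_card] at this
    omega
  -- reachability sets
  set R : V → Set V := fun v => {u | ReachIn E W u v} with hRdef
  obtain ⟨v0, hv0W, hv0min⟩ :=
    Set.exists_min_image W (fun v => (R v).ncard) W.toFinite hWne
  set S0 : Set V := sccOf E W v0 with hS0def
  have hS0scc : IsSCCIn E W S0 := sccOf_isSCCIn E W hv0W
  have hS0src : IsSourceComponent E F S0 := by
    refine ⟨hS0scc, ?_⟩
    intro u huF huS s hs hE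
    have huW : u ∈ W := ⟨Set.mem_univ u, huF⟩
    have hsW : s ∈ W := hS0scc.2.1 hs
    have husv0 : ReachIn E W u v0 :=
      (Relation.ReflTransGen.single ⟨huW, hsW, hE⟩).trans hs.2.1
    have hsub : R u ⊆ R v0 := fun x hx => hx.trans husv0
    have hv0notRu : v0 ∉ R u := by
      intro hv0u
      exact huS ⟨huW, husv0, hv0u⟩
    have hss : R u ⊂ R v0 :=
      ⟨hsub, fun h => hv0notRu (h Relation.ReflTransGen.refl)⟩
    have hlt : (R u).ncard < (R v0).ncard := Set.ncard_lt_ncard hss (R v0).toFinite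
    exact absurd (hv0min u huW) (by omega)
  refine ⟨S0, hS0src, fun S' hS' => source_component_unique hF hSC hS' hS0src⟩
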